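/- For $b, m, h > 0$, the inequality $\psi_h(t) = -m^2 + t^2(h-t)^{2b} \le 0$ holds for all $t \in (0,h)$ if and only if $h \le h^\# := \frac{b+1}{b^{b/(b+1)}} m^{1/(b+1)}$. -/

import Mathlib

open Real

-- AM-GM bound: for 0 < t < h, t * (h-t)^b ≤ b^b * (h/(b+1))^(b+1)
lemma key_bound (b h t : ℝ) (hb : 0 < b) (ht : 0 < t) (hth : t < h) :
    t * (h - t) ^ b ≤ b ^ b * (h / (b + 1)) ^ (b + 1) := by
  have hb1 : (0:ℝ) < b + 1 := by linarith
  have hu : (0:ℝ) ≤ h - t := by linarith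
  have hw : 1 / (b + 1) + b / (b + 1) = 1 := by
    rw [← add_div, add_comm, div_self hb1.ne']
  have hgm := Real.geom_mean_le_arith_mean2_weighted (by positivity) (by positivity)
    ht.le (by positivity : (0:ℝ) ≤ (h - t) / b) hw
  have hrhs : 1 / (b + 1) * t + b / (b + 1) * ((h - t) / b) = h / (b + 1) := by
    field_simp [hb1.ne']
    ring
  rw [hrhs] at hgm
  have h2 := Real.rpow_le_rpow (by positivity) hgm hb1.le
  have e1 : (t ^ (1 / (b + 1)) * ((h - t) / b) ^ (b / (b + 1))) ^ (b + 1)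
      = t * (h - t) ^ b / b ^ b := by
    rw [Real.mul_rpow (by positivity) (by positivity), ← Real.rpow_mul ht.le,
      ← Real.rpow_mul (by positivity), show 1 / (b + 1) * (b + 1) = 1 by field_simp,
      show b / (b + 1) * (b + 1) = b by field_simp, Real.rpow_one,
      Real.div_rpow hu hb.le, mul_div_assoc]
  rw [e1, div_le_iff₀ (by positivity)] at h2
  linarith [h2]

lemma peak_eq (b h : ℝ) (hb : 0 < b) (hh : 0 < h) :
    (h / (b + 1)) * (h - h / (b + 1)) ^ b = b ^ b * (h / (b + 1)) ^ (b + 1) := by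
  have hb1 : (0:ℝ) < b + 1 := by linarith
  have hts : (0:ℝ) < h / (b + 1) := by positivity
  have e : h - h / (b + 1) = b * (h / (b + 1)) := by field_simp [hb1.ne']; ring
  rw [e, Real.mul_rpow hb.le hts.le, Real.rpow_add hts, Real.rpow_one]
  ring

lemma hsharp_eq (b m : ℝ) (hb : 0 < b) (hm : 0 < m) :
    b ^ b * (((b + 1) / b ^ (b / (b + 1)) * m ^ (1 / (b + 1))) / (b + 1)) ^ (b + 1) = m := by
  have hb1 : (0:ℝ) < b + 1 := by linarith
  have e1 : ((b + 1) / b ^ (b / (b + 1)) * m ^ (1 / (b + 1))) / (b + 1)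
      = m ^ (1 / (b + 1)) / b ^ (b / (b + 1)) := by
    have hbn : b ^ (b / (b + 1)) ≠ 0 := by positivity
    field_simp [hb1.ne', hbn]
  rw [e1, Real.div_rpow (by positivity) (by positivity), ← Real.rpow_mul hm.le,
    ← Real.rpow_mul hb.le, show 1 / (b + 1) * (b + 1) = 1 by field_simp,
    show b / (b + 1) * (b + 1) = b by field_simp, Real.rpow_one]
  have hbb : (0:ℝ) < b ^ b := by positivity
  field_simp

/-- For b, m, h > 0, ψ_h(t) = -m² + t²(h-t)^{2b} ≤ 0 for all t ∈ (0,h)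
iff h ≤ h^# = (b+1)/b^{b/(b+1)} · m^{1/(b+1)}. -/
theorem psi_nonpos_iff (b m h : ℝ) (hb : 0 < b) (hm : 0 < m) (hh : 0 < h) :
    (∀ t ∈ Set.Ioo (0:ℝ) h, -m^2 + t^2 * (h - t) ^ (2*b) ≤ 0) ↔
      h ≤ (b+1) / b ^ (b/(b+1)) * m ^ (1/(b+1)) := by
  have hb1 : (0:ℝ) < b + 1 := by linarith
  set H := (b + 1) / b ^ (b / (b + 1)) * m ^ (1 / (b + 1)) with hHdef
  have hH : 0 < H := by positivity
  have hpt : ∀ t ∈ Set.Ioo (0:ℝ) h,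
      ((-m^2 + t^2 * (h - t) ^ (2*b) ≤ 0) ↔ t * (h - t) ^ b ≤ m) := by
    rintro t ⟨ht0, hth⟩
    have hu : (0:ℝ) ≤ h - t := by linarith
    have e : t^2 * (h - t) ^ (2*b) = (t * (h - t) ^ b)^2 := by
      rw [mul_pow, ← Real.rpow_natCast ((h - t) ^ b) 2, ← Real.rpow_mul hu, mul_comm b]
      norm_num
    rw [e]
    constructor
    · intro hle
      have h2 : (t * (h - t) ^ b)^2 ≤ m^2 := by linarith
      exact (pow_le_pow_iff_left₀ (by positivity) hm.le (by norm_num)).mp h2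
    · intro hle
      have h2 : (t * (h - t) ^ b)^2 ≤ m^2 :=
        pow_le_pow_left₀ (by positivity) hle 2
      linarith
  have hmono : h ≤ H ↔ b ^ b * (h / (b + 1)) ^ (b + 1) ≤ m := by
    rw [← hsharp_eq b m hb hm, ← hHdef,
      mul_le_mul_iff_right₀ (by positivity : (0:ℝ) < b ^ b),
      Real.rpow_le_rpow_iff (by positivity) (by positivity) hb1,
      div_le_div_iff_of_pos_right hb1]
  constructor
  · intro hall
    have hts : h / (b + 1) ∈ Set.Ioo (0:ℝ) h := by
      constructor
      · positivity
      · rw [div_lt_iff₀ hb1]; nlinarith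
    have := (hpt _ hts).mp (hall _ hts)
    rw [peak_eq b h hb hh] at this
    exact hmono.mpr this
  · intro hle t ht
    refine (hpt t ht).mpr ?_
    exact le_trans (key_bound b h t hb ht.1 ht.2) (hmono.mp hle)
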